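/- arXiv:1510.05193 — 3 statements merged into one kernel-verified Lean document; each statement's English description precedes it below -/
import Mathlib

section
/- Existence part of the wellposedness theorem for the limiting transport equation: the family of finite Borel measures μ_t(A) = α ∫₀^t 1_A(e + q s) ds on ℝ² (t ≥ 0), i.e. μ_t = α ∫₀^t δ_{e+qs} ds, satisfies the weak transport equation: for every continuously differentiable f : ℝ × ℝ² → ℝ with compact support contained in (0,∞) × ℝ², ∫₀^∞ ∫_{ℝ²} ∂_t f(t,x) μ_t(dx) dt + ∫₀^∞ ∫_{ℝ²} q · ∇_x f(t,x) μ_t(dx) dt + α ∫₀^∞ f(t,e) dt = 0. Moreover t ↦ μ_t is continuous in the topology of weak convergence of finite measures and μ_0 = 0. -/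
open MeasureTheory Filter
open scoped ENNReal NNReal

/-- The candidate solution of the transport equation:
`μ_t(A) = α ∫₀^t 1_A(e + q s) ds`, i.e. `μ_t = α ∫₀^t δ_{e+qs} ds`. -/
noncomputable def transportSol (q e : ℝ × ℝ) (α : ℝ) (t : ℝ) : Measure (ℝ × ℝ) :=
  ENNReal.ofReal α • Measure.map (fun s : ℝ => e + s • q) (volume.restrict (Set.Ioc 0 t))


open Set in
private lemma integral_transportSol (q e : ℝ × ℝ) (α : ℝ) (hα : 0 ≤ α) (t : ℝ)
    {g : ℝ × ℝ → ℝ} (hg : Continuous g) :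
    ∫ x, g x ∂(transportSol q e α t) = α * ∫ s in Set.Ioc 0 t, g (e + s • q) := by
  have hφ : Measurable (fun s : ℝ => e + s • q) := by fun_prop
  rw [transportSol, integral_smul_measure, ENNReal.toReal_ofReal hα,
    integral_map hφ.aemeasurable hg.aestronglyMeasurable, smul_eq_mul]

open Set in
private lemma part4 (q e : ℝ × ℝ) (α : ℝ) (hα : 0 < α)
    (f : ℝ × (ℝ × ℝ) → ℝ) (hf : ContDiff ℝ 1 f) (hcs : HasCompactSupport f)
    (hsupp : tsupport f ⊆ Set.Ioi (0 : ℝ) ×ˢ Set.univ) :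
    (∫ t in Set.Ioi (0:ℝ), ∫ x, deriv (fun s => f (s, x)) t ∂(transportSol q e α t))
      + (∫ t in Set.Ioi (0:ℝ), ∫ x, fderiv ℝ (fun y => f (t, y)) x q ∂(transportSol q e α t))
      + α * ∫ t in Set.Ioi (0:ℝ), f (t, e) = 0 := by
  have hfd : Differentiable ℝ f := hf.differentiable one_ne_zero
  have hD : Continuous (fderiv ℝ f) := hf.continuous_fderiv one_ne_zero
  set φ : ℝ → ℝ × ℝ := fun s => e + s • q with hφdef
  have hφc : Continuous φ := by fun_prop
  -- support bound
  obtain ⟨R, hR⟩ := hcs.isBounded.subset_closedBall 0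
  have hf0 : ∀ (u : ℝ) (x : ℝ × ℝ), R < |u| → f (u, x) = 0 := by
    intro u x hu
    apply image_eq_zero_of_notMem_tsupport
    intro hmem
    have h1 := hR hmem
    rw [Metric.mem_closedBall, dist_zero_right, Prod.norm_def] at h1
    have : |u| ≤ R := le_trans (le_max_left _ _) h1
    linarith
  have hf0' : ∀ (u : ℝ) (x : ℝ × ℝ), u ≤ 0 → f (u, x) = 0 := by
    intro u x hu
    apply image_eq_zero_of_notMem_tsupport
    intro hmem
    exact absurd (hsupp hmem).1 (not_lt.2 hu)
  -- derivatives
  have h1 : ∀ (t : ℝ) (x : ℝ × ℝ),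
      HasDerivAt (fun u => f (u, x)) (fderiv ℝ f (t, x) (1, 0)) t := fun t x =>
    (hfd (t, x)).hasFDerivAt.comp_hasDerivAt t
      ((hasDerivAt_id t).prodMk (hasDerivAt_const t x))
  have h1' : ∀ (t : ℝ) (x : ℝ × ℝ),
      deriv (fun s => f (s, x)) t = fderiv ℝ f (t, x) (1, 0) := fun t x => (h1 t x).deriv
  have h2 : ∀ (t s : ℝ),
      HasDerivAt (fun s : ℝ => f (t, φ s)) (fderiv ℝ f (t, φ s) ((0:ℝ), q)) s := by
    intro t s
    have hq : HasDerivAt φ q s := by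
      simpa [hφdef] using (((hasDerivAt_id s).smul_const q).const_add e)
    exact (hfd (t, φ s)).hasFDerivAt.comp_hasDerivAt s ((hasDerivAt_const s t).prodMk hq)
  have h2' : ∀ (t : ℝ) (x : ℝ × ℝ),
      fderiv ℝ (fun y => f (t, y)) x q = fderiv ℝ f (t, x) ((0:ℝ), q) := by
    intro t x
    have h : HasFDerivAt (fun y : ℝ × ℝ => f (t, y))
        ((fderiv ℝ f (t, x)).comp (ContinuousLinearMap.inr ℝ ℝ (ℝ × ℝ))) x :=
      (hfd (t, x)).hasFDerivAt.comp x (hasFDerivAt_prodMk_right t x)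
    rw [h.fderiv]; simp
  -- the Fubini integrand
  set G1 : ℝ × ℝ → ℝ := fun p => fderiv ℝ f (p.1, φ p.2) (1, 0) with hG1def
  have hG1 : Continuous G1 :=
    (hD.comp (continuous_fst.prodMk (hφc.comp continuous_snd))).clm_apply continuous_const
  have hG10 : ∀ p : ℝ × ℝ, R < |p.1| → G1 p = 0 := by
    intro p hp
    have heq : (fun u => f (u, φ p.2)) =ᶠ[nhds p.1] (fun _ => (0:ℝ)) := by
      have : ∀ᶠ u in nhds p.1, R < |u| :=
        (continuous_abs.continuousAt (x := p.1)).eventually_const_lt hp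
      exact this.mono fun u hu => hf0 u (φ p.2) hu
    have : G1 p = deriv (fun u => f (u, φ p.2)) p.1 := ((h1 p.1 (φ p.2)).deriv).symm
    rw [this, heq.deriv_eq, deriv_const]

  have habs : ∀ t : ℝ, t ∉ Icc (-R) R → R < |t| := by
    intro t ht
    simp only [Set.mem_Icc, not_and_or, not_le] at ht
    rcases ht with h | h
    · calc R < -t := by linarith
        _ ≤ |t| := neg_le_abs t
    · exact lt_of_lt_of_le h (le_abs_self t)
  -- region and indicator
  set S : Set (ℝ × ℝ) := {p | 0 < p.2 ∧ p.2 ≤ p.1} with hSdef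
  have hS : MeasurableSet S :=
    (measurableSet_lt measurable_const measurable_snd).inter
      (measurableSet_le measurable_snd measurable_fst)
  set F : ℝ × ℝ → ℝ := S.indicator G1 with hFdef
  -- integrability of F
  obtain ⟨C, hC⟩ := (isCompact_Icc.prod isCompact_Icc :
      IsCompact (Icc (0:ℝ) R ×ˢ Icc (0:ℝ) R)).exists_bound_of_continuousOn hG1.continuousOn
  have hbound : ∀ p : ℝ × ℝ,
      ‖F p‖ ≤ (Icc (0:ℝ) R ×ˢ Icc (0:ℝ) R).indicator (fun _ => max C 0) p := by
    intro p
    by_cases hpS : p ∈ S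
    · rw [hFdef, indicator_of_mem hpS]
      by_cases hG : G1 p = 0
      · rw [hG, norm_zero]
        exact indicator_nonneg (fun _ _ => le_max_right C 0) p
      · have h1R : |p.1| ≤ R := by
          by_contra h; exact hG (hG10 p (lt_of_not_ge h))
        have hp2 : 0 < p.2 := hpS.1
        have hp21 : p.2 ≤ p.1 := hpS.2
        have hpbox : p ∈ Icc (0:ℝ) R ×ˢ Icc (0:ℝ) R :=
          ⟨⟨le_trans hp2.le hp21, (abs_le.mp h1R).2⟩,
           ⟨hp2.le, le_trans hp21 (abs_le.mp h1R).2⟩⟩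
        rw [indicator_of_mem hpbox]
        exact le_trans (hC p hpbox) (le_max_left C 0)
    · rw [hFdef, indicator_of_notMem hpS, norm_zero]
      exact indicator_nonneg (fun _ _ => le_max_right C 0) p
  have hFint : Integrable F (volume : Measure (ℝ × ℝ)) := by
    refine Integrable.mono' ?_ (hG1.stronglyMeasurable.indicator hS).aestronglyMeasurable
      (ae_of_all _ hbound)
    exact IntegrableOn.integrable_indicator
      ((integrableOn_const_iff).mpr (Or.inr ((isCompact_Icc.prod isCompact_Icc).measure_lt_top)))
      (measurableSet_Icc.prod measurableSet_Icc)
  have hFint' : Integrable F ((volume.restrict (Ioi (0:ℝ))).prod (volume : Measure ℝ)) := by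
    have hmeq : (volume.restrict (Ioi (0:ℝ))).prod (volume : Measure ℝ)
        = (volume : Measure (ℝ × ℝ)).restrict (Ioi (0:ℝ) ×ˢ univ) := by
      rw [Measure.volume_eq_prod, ← Measure.prod_restrict, Measure.restrict_univ]
    rw [hmeq]
    exact hFint.restrict
  have hswap : ∫ t in Ioi (0:ℝ), ∫ s, F (t, s) = ∫ s, ∫ t in Ioi (0:ℝ), F (t, s) :=
    integral_integral_swap (f := fun t s => F (t, s)) hFint'
  have einner1 : ∀ t : ℝ, ∫ s in Ioc (0:ℝ) t, G1 (t, s) = ∫ s, F (t, s) := by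
    intro t
    rw [← integral_indicator measurableSet_Ioc]
    refine integral_congr_ae (ae_of_all _ fun s => ?_)
    simp only [hFdef, hSdef, Set.indicator_apply, Set.mem_Ioc, Set.mem_setOf_eq]
  have hG1cs : ∀ s : ℝ, HasCompactSupport (fun t => G1 (t, s)) := by
    intro s
    apply HasCompactSupport.intro (isCompact_Icc (a := -R) (b := R))
    intro t ht
    exact hG10 (t, s) (habs t ht)
  have einner2 : ∀ s : ℝ, (∫ t in Ioi (0:ℝ), F (t, s)) =
      (Ioi (0:ℝ)).indicator (fun s => -f (s, φ s)) s := by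
    intro s
    by_cases hs : s ∈ Ioi (0:ℝ)
    · rw [indicator_of_mem hs]
      have hs' : (0:ℝ) < s := hs
      have hFs : ∀ t : ℝ, F (t, s) = (Ici s).indicator (fun t => G1 (t, s)) t := by
        intro t
        simp only [hFdef, hSdef, Set.indicator_apply, Set.mem_setOf_eq, Set.mem_Ici, hs',
          true_and]
      simp_rw [hFs]
      rw [integral_indicator measurableSet_Ici, Measure.restrict_restrict measurableSet_Ici,
        show Ici s ∩ Ioi (0:ℝ) = Ici s from
          Set.inter_eq_self_of_subset_left (fun x hx => lt_of_lt_of_le hs' hx),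
        integral_Ici_eq_integral_Ioi]
      have hint : IntegrableOn (fun t => G1 (t, s)) (Ioi s) volume :=
        ((hG1.comp (continuous_id.prodMk continuous_const)).integrable_of_hasCompactSupport
          (hG1cs s)).integrableOn
      have htends : Tendsto (fun t => f (t, φ s)) atTop (nhds 0) := by
        refine tendsto_const_nhds.congr' ?_
        filter_upwards [eventually_gt_atTop R] with t ht
        exact (hf0 t (φ s) (lt_of_lt_of_le ht (le_abs_self t))).symm
      rw [integral_Ioi_of_hasDerivAt_of_tendsto' (fun t _ => h1 t (φ s)) hint htends, zero_sub]
    · rw [indicator_of_notMem hs]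
      have hz : ∀ t : ℝ, F (t, s) = 0 := by
        intro t
        exact indicator_of_notMem (fun hmem => hs hmem.1) _
      simp [hz]
  -- integrability of the boundary terms
  have hcφ : Continuous fun t : ℝ => f (t, φ t) := hf.continuous.comp (continuous_id.prodMk hφc)
  have hcsφ : HasCompactSupport fun t : ℝ => f (t, φ t) :=
    HasCompactSupport.intro (isCompact_Icc (a := -R) (b := R))
      (fun t ht => hf0 t (φ t) (habs t ht))
  have hintA : IntegrableOn (fun t => f (t, φ t)) (Ioi (0:ℝ)) volume :=
    (hcφ.integrable_of_hasCompactSupport hcsφ).integrableOn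
  have hce : Continuous fun t : ℝ => f (t, e) :=
    hf.continuous.comp (continuous_id.prodMk continuous_const)
  have hcse : HasCompactSupport fun t : ℝ => f (t, e) :=
    HasCompactSupport.intro (isCompact_Icc (a := -R) (b := R))
      (fun t ht => hf0 t e (habs t ht))
  have hintB : IntegrableOn (fun t => f (t, e)) (Ioi (0:ℝ)) volume :=
    (hce.integrable_of_hasCompactSupport hcse).integrableOn
  -- rewrite the two inner integrals
  have e1 : ∀ t : ℝ, ∫ x, deriv (fun s => f (s, x)) t ∂(transportSol q e α t)
      = α * ∫ s, F (t, s) := by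
    intro t
    have hgc : Continuous fun x : ℝ × ℝ => fderiv ℝ f (t, x) ((1:ℝ), (0 : ℝ × ℝ)) :=
      (hD.comp (continuous_const.prodMk continuous_id)).clm_apply continuous_const
    calc ∫ x, deriv (fun s => f (s, x)) t ∂(transportSol q e α t)
        = ∫ x, fderiv ℝ f (t, x) ((1:ℝ), (0 : ℝ × ℝ)) ∂(transportSol q e α t) := by
          exact integral_congr_ae (ae_of_all _ fun x => h1' t x)
      _ = α * ∫ s in Ioc (0:ℝ) t, G1 (t, s) := integral_transportSol q e α hα.le t hgc
      _ = α * ∫ s, F (t, s) := by rw [einner1 t]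
  have e2 : ∀ t ∈ Ioi (0:ℝ), ∫ x, fderiv ℝ (fun y => f (t, y)) x q ∂(transportSol q e α t)
      = α * (f (t, φ t) - f (t, e)) := by
    intro t ht
    have hgc : Continuous fun x : ℝ × ℝ => fderiv ℝ f (t, x) ((0:ℝ), q) :=
      (hD.comp (continuous_const.prodMk continuous_id)).clm_apply continuous_const
    have hrw : (fun x : ℝ × ℝ => fderiv ℝ (fun y => f (t, y)) x q)
        = fun x => fderiv ℝ f (t, x) ((0:ℝ), q) := funext (h2' t)
    rw [hrw, integral_transportSol q e α hα.le t hgc]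
    congr 1
    rw [← intervalIntegral.integral_of_le (le_of_lt (ht : (0:ℝ) < t))]
    rw [intervalIntegral.integral_eq_sub_of_hasDerivAt (fun s _ => h2 t s)
      (((hD.comp (continuous_const.prodMk hφc)).clm_apply
        continuous_const).intervalIntegrable 0 t)]
    simp [hφdef]
  -- assemble
  rw [setIntegral_congr_fun measurableSet_Ioi (fun t _ => e1 t),
    setIntegral_congr_fun measurableSet_Ioi e2, integral_const_mul, integral_const_mul, hswap]
  have hfinal : ∫ s, ∫ t in Ioi (0:ℝ), F (t, s) = -∫ s in Ioi (0:ℝ), f (s, φ s) := by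
    rw [show (fun s => ∫ t in Ioi (0:ℝ), F (t, s))
        = (Ioi (0:ℝ)).indicator (fun s => -f (s, φ s)) from funext einner2]
    rw [integral_indicator measurableSet_Ioi, integral_neg]
  rw [hfinal, integral_sub hintA hintB]
  ring

/-- existence part of wellposedness. The family
`μ_t = α ∫₀^t δ_{e+qs} ds` of finite Borel measures on `ℝ²` satisfies `μ_0 = 0`, is weakly
continuous in `t` on `[0,∞)`, and solves the weak transport equation: for every `C¹`
function `f : ℝ × ℝ² → ℝ` with compact support contained in `(0,∞) × ℝ²`,
`∫₀^∞ ∫ ∂_t f dμ_t dt + ∫₀^∞ ∫ q·∇_x f dμ_t dt + α ∫₀^∞ f(t,e) dt = 0`. -/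

theorem transportSol_solves_weak_transport_equation
    (q e : ℝ × ℝ) (α : ℝ) (hα : 0 < α) :
    (∀ t : ℝ, IsFiniteMeasure (transportSol q e α t)) ∧
    transportSol q e α 0 = 0 ∧
    (∀ g : BoundedContinuousFunction (ℝ × ℝ) ℝ,
      ContinuousOn (fun t : ℝ => ∫ x, g x ∂(transportSol q e α t)) (Set.Ici 0)) ∧
    (∀ f : ℝ × (ℝ × ℝ) → ℝ, ContDiff ℝ 1 f → HasCompactSupport f →
      tsupport f ⊆ Set.Ioi (0 : ℝ) ×ˢ Set.univ →
      (∫ t in Set.Ioi (0 : ℝ), ∫ x, deriv (fun s => f (s, x)) t ∂(transportSol q e α t))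
        + (∫ t in Set.Ioi (0 : ℝ), ∫ x, fderiv ℝ (fun y => f (t, y)) x q ∂(transportSol q e α t))
        + α * ∫ t in Set.Ioi (0 : ℝ), f (t, e) = 0) := by
  refine ⟨fun t => ?_, ?_, fun g => ?_, fun f hf hcs hsupp => part4 q e α hα f hf hcs hsupp⟩
  · constructor
    have hφ : Measurable (fun s : ℝ => e + s • q) := by fun_prop
    rw [transportSol, Measure.smul_apply, Measure.map_apply hφ MeasurableSet.univ]
    simp only [Set.preimage_univ, Measure.restrict_apply MeasurableSet.univ, Set.univ_inter,
      smul_eq_mul]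
    exact ENNReal.mul_lt_top ENNReal.ofReal_lt_top (by simp [Real.volume_Ioc])
  · simp [transportSol]
  · have hc : Continuous (fun s : ℝ => g (e + s • q)) := g.continuous.comp (by fun_prop)
    have hcont : Continuous (fun t : ℝ => α * ∫ s in (0:ℝ)..t, g (e + s • q)) :=
      continuous_const.mul (intervalIntegral.continuous_primitive
        (fun a b => hc.intervalIntegrable a b) 0)
    refine hcont.continuousOn.congr (fun t ht => ?_)
    beta_reduce
    rw [integral_transportSol q e α hα.le t g.continuous,
      intervalIntegral.integral_of_le (ht : (0:ℝ) ≤ t)]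
end

section
/- Uniqueness for the homogeneous transport equation: if (ν_t)_{t≥0} is a family of finite Borel measures on ℝ² such that t ↦ ν_t is continuous in the topology of weak convergence of finite measures, ν_0 = 0, and for every continuously differentiable f : ℝ × ℝ² → ℝ with compact support contained in (0,∞) × ℝ² one has ∫₀^∞ ∫_{ℝ²} ∂_t f(t,x) ν_t(dx) dt + ∫₀^∞ ∫_{ℝ²} q · ∇_x f(t,x) ν_t(dx) dt = 0, then ν_t = 0 for all t ≥ 0. -/
open MeasureTheory Filter
open scoped ENNReal NNReal Topology

namespace TransportUnique

open Set Metric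

/-- Continuity of the shifted test-function integral against the measure family. -/
lemma contG (q : ℝ × ℝ) (ν : ℝ → Measure (ℝ × ℝ)) (hfin : ∀ t, IsFiniteMeasure (ν t))
    (hcont : ∀ g : BoundedContinuousFunction (ℝ × ℝ) ℝ,
      ContinuousOn (fun t : ℝ => ∫ x, g x ∂(ν t)) (Set.Ici 0))
    (g : (ℝ × ℝ) → ℝ) (hg : Continuous g) (hgs : HasCompactSupport g) :
    ContinuousOn (fun t : ℝ => ∫ x, g (x - t • q) ∂(ν t)) (Set.Ici 0) := by
  have hint : ∀ s t : ℝ, Integrable (fun x => g (x - s • q)) (ν t) := by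
    intro s t
    haveI := hfin t
    exact (hg.comp (continuous_id.sub continuous_const)).integrable_of_hasCompactSupport
      (hgs.comp_isClosedEmbedding (Homeomorph.subRight (s • q)).isClosedEmbedding)
  intro t₀ ht₀
  rw [Metric.continuousWithinAt_iff]
  intro ε hε
  obtain ⟨C, hC⟩ := hg.bounded_above_of_compact_support hgs
  have hm : ContinuousWithinAt (fun t : ℝ => ∫ x, (1 : ℝ) ∂(ν t)) (Set.Ici 0) t₀ := by
    have := hcont 1 t₀ ht₀
    simpa using this
  set M : ℝ := (∫ x, (1 : ℝ) ∂(ν t₀)) + 1 with hMdef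
  have hM0 : 0 < M := by
    have : (0:ℝ) ≤ ∫ x, (1 : ℝ) ∂(ν t₀) := integral_nonneg fun _ => zero_le_one
    simp only [hMdef]; linarith
  obtain ⟨δ₃, hδ₃, hδ₃'⟩ := Metric.continuousWithinAt_iff.1 hm 1 one_pos
  have hu := hgs.uniformContinuous_of_continuous hg
  obtain ⟨δ₁, hδ₁, hδ₁'⟩ := Metric.uniformContinuous_iff.1 hu (ε / (2 * M)) (by positivity)
  set g₀ : BoundedContinuousFunction (ℝ × ℝ) ℝ :=
    BoundedContinuousFunction.ofNormedAddCommGroup (fun x => g (x - t₀ • q))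
      (hg.comp (continuous_id.sub continuous_const)) C (fun x => hC _) with hg₀def
  obtain ⟨δ₂, hδ₂, hδ₂'⟩ := Metric.continuousWithinAt_iff.1 (hcont g₀ t₀ ht₀) (ε / 2)
    (by positivity)
  refine ⟨min (min δ₂ δ₃) (δ₁ / (‖q‖ + 1)), by positivity, ?_⟩
  intro t ht htd
  have htδ₂ : dist t t₀ < δ₂ := lt_of_lt_of_le htd ((min_le_left _ _).trans (min_le_left _ _))
  have htδ₃ : dist t t₀ < δ₃ := lt_of_lt_of_le htd ((min_le_left _ _).trans (min_le_right _ _))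
  have htδ₁ : dist t t₀ < δ₁ / (‖q‖ + 1) := lt_of_lt_of_le htd (min_le_right _ _)
  have hmass : (∫ x, (1 : ℝ) ∂(ν t)) ≤ M := by
    have h1 := hδ₃' ht htδ₃
    rw [Real.dist_eq] at h1
    have := abs_lt.1 h1
    simp only [hMdef]; linarith [this.2]
  have hpt : ∀ x : ℝ × ℝ, |g (x - t • q) - g (x - t₀ • q)| ≤ ε / (2 * M) := by
    intro x
    have hd : dist (x - t • q) (x - t₀ • q) < δ₁ := by
      rw [dist_eq_norm]
      have he : (x - t • q) - (x - t₀ • q) = (t₀ - t) • q := by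
        rw [sub_smul]; abel
      rw [he, norm_smul]
      have h2 : dist t t₀ * (‖q‖ + 1) < δ₁ := (lt_div_iff₀ (by positivity)).1 htδ₁
      have h3 : ‖t₀ - t‖ = dist t t₀ := by rw [Real.dist_eq, Real.norm_eq_abs, abs_sub_comm]
      nlinarith [norm_nonneg q, dist_nonneg (x := t) (y := t₀)]
    have := hδ₁' hd
    rw [Real.dist_eq] at this
    exact this.le
  have hsub : |(∫ x, g (x - t • q) ∂(ν t)) - ∫ x, g (x - t₀ • q) ∂(ν t)| ≤ ε / 2 := by
    haveI := hfin t
    rw [← integral_sub (hint t t) (hint t₀ t)]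
    have habs : |∫ x, (g (x - t • q) - g (x - t₀ • q)) ∂(ν t)|
        ≤ ∫ x, |g (x - t • q) - g (x - t₀ • q)| ∂(ν t) := by
      simpa [Real.norm_eq_abs] using
        norm_integral_le_integral_norm (fun x => g (x - t • q) - g (x - t₀ • q)) (μ := ν t)
    have hmono : (∫ x, |g (x - t • q) - g (x - t₀ • q)| ∂(ν t))
        ≤ ∫ x, (ε / (2 * M)) ∂(ν t) :=
      integral_mono ((hint t t).sub (hint t₀ t)).abs (integrable_const _) hpt
    have hconst : (∫ x, (ε / (2 * M)) ∂(ν t)) ≤ ε / 2 := by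
      rw [integral_const, smul_eq_mul]
      have hm1 : ((ν t) univ).toReal = ∫ x, (1 : ℝ) ∂(ν t) := by
        rw [integral_const, smul_eq_mul, mul_one]; rfl
      have h4 : ((ν t) univ).toReal ≤ M := by rw [hm1]; exact hmass
      have h5 : (0:ℝ) ≤ ε / (2 * M) := by positivity
      calc ((ν t) univ).toReal * (ε / (2 * M)) ≤ M * (ε / (2 * M)) := by
            exact mul_le_mul_of_nonneg_right h4 h5
        _ = ε / 2 := by field_simp
    linarith [habs.trans (hmono.trans hconst)]
  have hsecond : |(∫ x, g (x - t₀ • q) ∂(ν t)) - ∫ x, g (x - t₀ • q) ∂(ν t₀)| < ε / 2 := by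
    have := hδ₂' ht htδ₂
    rw [Real.dist_eq] at this
    simpa [hg₀def, BoundedContinuousFunction.coe_ofNormedAddCommGroup] using this
  rw [Real.dist_eq]
  calc |(∫ x, g (x - t • q) ∂(ν t)) - ∫ x, g (x - t₀ • q) ∂(ν t₀)|
      ≤ |(∫ x, g (x - t • q) ∂(ν t)) - ∫ x, g (x - t₀ • q) ∂(ν t)|
        + |(∫ x, g (x - t₀ • q) ∂(ν t)) - ∫ x, g (x - t₀ • q) ∂(ν t₀)| := abs_sub_le _ _ _
    _ < ε := by linarith

lemma cont_mul_indicator {ψ : ℝ → ℝ} {G : ℝ → ℝ} (hψ : Continuous ψ)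
    (hsupp : tsupport ψ ⊆ Set.Ioi 0) (hG : ContinuousOn G (Set.Ioi 0)) :
    Continuous fun t => ψ t * Set.indicator (Set.Ioi 0) G t := by
  rw [continuous_iff_continuousAt]
  intro t
  by_cases ht : t ∈ Set.Ioi (0:ℝ)
  · have hmem : Set.Ioi (0:ℝ) ∈ 𝓝 t := isOpen_Ioi.mem_nhds ht
    have hGt : ContinuousAt G t := hG.continuousAt hmem
    have heq : (fun s => ψ s * Set.indicator (Set.Ioi 0) G s) =ᶠ[𝓝 t] fun s => ψ s * G s := by
      filter_upwards [hmem] with s hs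
      rw [Set.indicator_of_mem hs]
    exact (hψ.continuousAt.mul hGt).congr heq.symm
  · have hn : (tsupport ψ)ᶜ ∈ 𝓝 t :=
      (isClosed_tsupport ψ).isOpen_compl.mem_nhds fun hmem => ht (hsupp hmem)
    have heq : (fun s => ψ s * Set.indicator (Set.Ioi 0) G s) =ᶠ[𝓝 t] fun _ => 0 := by
      filter_upwards [hn] with s hs
      rw [image_eq_zero_of_notMem_tsupport hs, zero_mul]
    exact continuousAt_const.congr heq.symm

lemma moll_est (φ : ContDiffBump (0:ℝ)) (a x₀ η δ : ℝ) (hδ : 0 ≤ δ) (F : ℝ → ℝ)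
    (hFi : Integrable (fun u => φ.normed volume (u - a) * F u))
    (hmod : ∀ u, |u - x₀| ≤ η → |F u - F x₀| ≤ δ)
    (hrange : |a - x₀| + φ.rOut ≤ η) :
    |(∫ u, φ.normed volume (u - a) * F u) - F x₀| ≤ δ := by
  set ρa : ℝ → ℝ := fun u => φ.normed volume (u - a) with hρadef
  have hρai : Integrable ρa := (φ.integrable_normed).comp_sub_right a
  have hρa1 : (∫ u, ρa u) = 1 := by
    rw [hρadef]
    rw [integral_sub_right_eq_self (φ.normed volume) a]
    exact φ.integral_normed
  have e : (∫ u, ρa u * F u) - F x₀ = ∫ u, ρa u * (F u - F x₀) := by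
    have h1 : (fun u => ρa u * (F u - F x₀)) = fun u => ρa u * F u - ρa u * F x₀ :=
      funext fun u => by ring
    rw [h1, integral_sub hFi (hρai.mul_const _), integral_mul_const, hρa1, one_mul]
  rw [show (∫ u, φ.normed volume (u - a) * F u) = ∫ u, ρa u * F u from rfl, e]
  have hdiff : Integrable (fun u => ρa u * (F u - F x₀)) volume := by
    have h1 : (fun u => ρa u * (F u - F x₀)) = fun u => ρa u * F u - ρa u * F x₀ :=
      funext fun u => by ring
    rw [h1]; exact hFi.sub (hρai.mul_const _)
  have hb : ∀ u, |ρa u * (F u - F x₀)| ≤ ρa u * δ := by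
    intro u
    rw [abs_mul, abs_of_nonneg (φ.nonneg_normed _)]
    by_cases hu : ρa u = 0
    · have h0 : φ.normed volume (u - a) = 0 := hu
      rw [h0]; rw [show ρa u = 0 from hu]; simp
    · have husupp : u - a ∈ Function.support (φ.normed volume) := hu
      rw [φ.support_normed_eq] at husupp
      have h2 : |u - a| < φ.rOut := by
        simpa [Real.norm_eq_abs] using mem_ball_zero_iff.1 husupp
      have hux : |u - x₀| ≤ η := by
        calc |u - x₀| ≤ |u - a| + |a - x₀| := abs_sub_le u a x₀
          _ ≤ η := by linarith
      exact mul_le_mul_of_nonneg_left (hmod u hux) (φ.nonneg_normed _)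
  calc |∫ u, ρa u * (F u - F x₀)| ≤ ∫ u, |ρa u * (F u - F x₀)| := by
        have := norm_integral_le_integral_norm (fun u => ρa u * (F u - F x₀)) (μ := volume)
        simpa [Real.norm_eq_abs, abs_mul] using this
    _ ≤ ∫ u, ρa u * δ := integral_mono hdiff.abs (hρai.mul_const δ) hb
    _ = δ := by rw [integral_mul_const, hρa1, one_mul]

lemma chi_package (φ : ContDiffBump (0:ℝ)) (a b : ℝ) (h0a : 0 < a - φ.rOut) (hab : a < b) :
    ∃ χ : ℝ → ℝ,
      (∀ s, HasDerivAt χ (φ.normed volume (s - a) - φ.normed volume (s - b)) s)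
      ∧ HasCompactSupport χ ∧ tsupport χ ⊆ Set.Ioi 0 := by
  set ρ : ℝ → ℝ := φ.normed volume with hρdef
  set ε : ℝ := φ.rOut with hεdef
  have hε : 0 < ε := φ.rOut_pos
  have hρc : Continuous ρ := φ.continuous_normed
  have hρi : Integrable ρ := φ.integrable_normed
  set h : ℝ → ℝ := fun u => ρ (u - a) - ρ (u - b) with hhdef
  have hhc : Continuous h := (hρc.comp (continuous_id.sub continuous_const)).sub
    (hρc.comp (continuous_id.sub continuous_const))
  have hhi : Integrable h := (hρi.comp_sub_right a).sub (hρi.comp_sub_right b)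
  set χ : ℝ → ℝ := fun s => ∫ u in (0:ℝ)..s, h u with hχdef
  have hρ0 : ∀ y : ℝ, ε ≤ |y| → ρ y = 0 := by
    intro y hy
    by_contra hne
    have hmem : y ∈ Function.support ρ := hne
    rw [hρdef, φ.support_normed_eq] at hmem
    have := mem_ball_zero_iff.1 hmem
    rw [Real.norm_eq_abs] at this; linarith
  have hχd : ∀ s, HasDerivAt χ (h s) s := fun s =>
    intervalIntegral.integral_hasDerivAt_right (hhi.intervalIntegrable)
      (hhc.stronglyMeasurableAtFilter _ _) hhc.continuousAt
  have hsupp : Function.support χ ⊆ Set.Icc (a - ε) (b + ε) := by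
    intro s hs
    by_contra hmem
    apply hs
    rw [Set.mem_Icc, not_and_or] at hmem
    rcases hmem with hm | hm
    · push_neg at hm
      have hz : Set.EqOn h (fun _ => (0:ℝ)) (Set.uIcc (0:ℝ) s) := by
        intro u hu
        have hu' : u ≤ a - ε := by
          rcases Set.mem_uIcc.1 hu with ⟨h1, h2⟩ | ⟨h1, h2⟩
          · linarith
          · linarith
        have hz1 : ρ (u - a) = 0 := hρ0 _ (by
          rw [abs_sub_comm, abs_of_nonneg (by linarith : (0:ℝ) ≤ a - u)]; linarith)
        have hz2 : ρ (u - b) = 0 := hρ0 _ (by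
          rw [abs_sub_comm, abs_of_nonneg (by linarith : (0:ℝ) ≤ b - u)]; linarith)
        simp only [hhdef, hz1, hz2, sub_zero]
      calc χ s = ∫ u in (0:ℝ)..s, (0:ℝ) := intervalIntegral.integral_congr hz
        _ = 0 := intervalIntegral.integral_zero
    · push_neg at hm
      have hsplit : χ s = (∫ u in (0:ℝ)..s, ρ (u - a)) - ∫ u in (0:ℝ)..s, ρ (u - b) :=
        intervalIntegral.integral_sub ((hρi.comp_sub_right a).intervalIntegrable)
          ((hρi.comp_sub_right b).intervalIntegrable)
      have hval : ∀ c : ℝ, a ≤ c → c + ε ≤ s → (∫ u in (0:ℝ)..s, ρ (u - c)) = 1 := by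
        intro c hc hcs
        rw [intervalIntegral.integral_eq_integral_of_support_subset]
        · rw [integral_sub_right_eq_self ρ c]; exact φ.integral_normed
        · intro u hu
          have h1 : u - c ∈ Function.support ρ := hu
          rw [hρdef, φ.support_normed_eq] at h1
          have habs := mem_ball_zero_iff.1 h1
          rw [Real.norm_eq_abs] at habs
          have h2 := abs_lt.1 habs
          exact ⟨by linarith [h2.1], by linarith [h2.2]⟩
      rw [hsplit, hval a le_rfl (by linarith), hval b hab.le (by linarith)]
      ring
  have htsupp : tsupport χ ⊆ Set.Icc (a - ε) (b + ε) := closure_minimal hsupp isClosed_Icc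
  refine ⟨χ, hχd, ?_, fun s hs => lt_of_lt_of_le h0a (by linarith [(htsupp hs).1])⟩
  exact IsCompact.of_isClosed_subset isCompact_Icc (isClosed_tsupport χ) htsupp

lemma key (q : ℝ × ℝ) (ν : ℝ → Measure (ℝ × ℝ)) (hfin : ∀ t, IsFiniteMeasure (ν t))
    (hweak : ∀ f : ℝ × (ℝ × ℝ) → ℝ, ContDiff ℝ 1 f → HasCompactSupport f →
      tsupport f ⊆ Set.Ioi (0 : ℝ) ×ˢ Set.univ →
      (∫ t in Set.Ioi (0 : ℝ), ∫ x, deriv (fun s => f (s, x)) t ∂(ν t))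
        + (∫ t in Set.Ioi (0 : ℝ), ∫ x, fderiv ℝ (fun y => f (t, y)) x q ∂(ν t)) = 0)
    (g : (ℝ × ℝ) → ℝ) (hg : ContDiff ℝ 1 g) (hgs : HasCompactSupport g)
    (χ h : ℝ → ℝ) (hh : Continuous h) (hhs : HasCompactSupport h)
    (hχd : ∀ s, HasDerivAt χ (h s) s) (hχs : HasCompactSupport χ)
    (hχsupp : tsupport χ ⊆ Set.Ioi 0) (hhsupp : tsupport h ⊆ Set.Ioi 0)
    (hGc : ContinuousOn (fun t : ℝ => ∫ x, g (x - t • q) ∂(ν t)) (Set.Ioi 0))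
    (hG₂c : ContinuousOn (fun t : ℝ => ∫ x, fderiv ℝ g (x - t • q) (-q) ∂(ν t)) (Set.Ioi 0)) :
    (∫ t : ℝ, h t * Set.indicator (Set.Ioi 0)
      (fun t => ∫ x, g (x - t • q) ∂(ν t)) t) = 0 := by
  have hχc : Continuous χ := by
    rw [continuous_iff_continuousAt]
    exact fun s => (hχd s).differentiableAt.continuousAt
  have hχ1 : ContDiff ℝ 1 χ := by
    refine contDiff_one_iff_deriv.2 ⟨fun s => (hχd s).differentiableAt, ?_⟩
    have hd : deriv χ = h := funext fun s => (hχd s).deriv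
    rw [hd]; exact hh
  have hgc : Continuous g := hg.continuous
  have hgd : Differentiable ℝ g := hg.differentiable one_ne_zero
  set g₂ : (ℝ × ℝ) → ℝ := fun y => fderiv ℝ g y (-q) with hg₂def
  have hg₂c : Continuous g₂ := (hg.continuous_fderiv one_ne_zero).clm_apply continuous_const
  have hg₂s : HasCompactSupport g₂ := by
    have hsub : tsupport g₂ ⊆ tsupport g := by
      apply closure_minimal _ (isClosed_tsupport g)
      intro y hy
      have : fderiv ℝ g y ≠ 0 := fun h0 => hy (by simp [hg₂def, h0])
      exact support_fderiv_subset ℝ this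
    exact IsCompact.of_isClosed_subset hgs (isClosed_tsupport g₂) hsub
  -- the test function
  set f : ℝ × (ℝ × ℝ) → ℝ := fun p => χ p.1 * g (p.2 - p.1 • q) with hfdef
  have hf1 : ContDiff ℝ 1 f :=
    (hχ1.comp contDiff_fst).mul (hg.comp (contDiff_snd.sub (contDiff_fst.smul contDiff_const)))
  have hf2 : HasCompactSupport f := by
    have hK2 : IsCompact ((fun p : ℝ × (ℝ × ℝ) => p.2 + p.1 • q) '' (tsupport χ ×ˢ tsupport g)) :=
      (hχs.prod hgs).image (continuous_snd.add (continuous_fst.smul continuous_const))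
    apply HasCompactSupport.intro (hχs.prod hK2)
    intro p hp
    by_contra hfp
    apply hp
    have h1 : χ p.1 ≠ 0 := fun h0 => hfp (by simp [hfdef, h0])
    have h2 : g (p.2 - p.1 • q) ≠ 0 := fun h0 => hfp (by simp [hfdef, h0])
    refine Set.mem_prod.2 ⟨subset_closure h1, ⟨(p.1, p.2 - p.1 • q),
      Set.mem_prod.2 ⟨subset_closure h1, subset_closure h2⟩, by simp⟩⟩
  have hf3 : tsupport f ⊆ Set.Ioi 0 ×ˢ Set.univ := by
    have h1 : Function.support f ⊆ tsupport χ ×ˢ Set.univ := by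
      intro p hp
      have : χ p.1 ≠ 0 := fun h0 => hp (by simp [hfdef, h0])
      exact Set.mem_prod.2 ⟨subset_closure this, Set.mem_univ _⟩
    have h2 : tsupport f ⊆ tsupport χ ×ˢ Set.univ :=
      closure_minimal h1 ((isClosed_tsupport χ).prod isClosed_univ)
    exact h2.trans (Set.prod_mono hχsupp subset_rfl)
  -- pointwise derivative identities
  have hderiv : ∀ (t : ℝ) (x : ℝ × ℝ),
      deriv (fun s => f (s, x)) t = h t * g (x - t • q) + χ t * g₂ (x - t • q) := by
    intro t x
    have d1 : HasDerivAt (fun s : ℝ => x - s • q) (-q) t := by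
      simpa using ((hasDerivAt_id t).smul_const q).const_sub x
    have d2 : HasDerivAt (fun s : ℝ => g (x - s • q)) (fderiv ℝ g (x - t • q) (-q)) t :=
      (hgd (x - t • q)).hasFDerivAt.comp_hasDerivAt t d1
    have d3 : HasDerivAt (fun s => χ s * g (x - s • q))
        (h t * g (x - t • q) + χ t * fderiv ℝ g (x - t • q) (-q)) t := (hχd t).mul d2
    simpa [hfdef, hg₂def] using d3.deriv
  have hfderiv : ∀ (t : ℝ) (x : ℝ × ℝ),
      fderiv ℝ (fun y => f (t, y)) x q = -(χ t * g₂ (x - t • q)) := by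
    intro t x
    have d3 : HasFDerivAt (fun y : ℝ × ℝ => g (y - t • q)) (fderiv ℝ g (x - t • q)) x := by
      have := ((hgd (x - t • q)).hasFDerivAt).comp x ((hasFDerivAt_id x).sub_const (t • q))
      exact this
    have d4 := d3.const_mul (χ t)
    have d5 : fderiv ℝ (fun y => f (t, y)) x = χ t • fderiv ℝ g (x - t • q) := by
      have : (fun y => f (t, y)) = fun y => χ t * g (y - t • q) := rfl
      rw [this]
      exact d4.fderiv
    rw [d5]
    simp only [ContinuousLinearMap.smul_apply, smul_eq_mul, hg₂def, map_neg, mul_neg, neg_neg]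
  -- integrability in x
  have hxint : ∀ (g' : (ℝ × ℝ) → ℝ), Continuous g' → HasCompactSupport g' → ∀ t : ℝ,
      Integrable (fun x => g' (x - t • q)) (ν t) := by
    intro g' hc hs t
    haveI := hfin t
    exact (hc.comp (continuous_id.sub continuous_const)).integrable_of_hasCompactSupport
      (hs.comp_isClosedEmbedding (Homeomorph.subRight (t • q)).isClosedEmbedding)
  have hI1 : ∀ t : ℝ, (∫ x, deriv (fun s => f (s, x)) t ∂(ν t))
      = h t * (∫ x, g (x - t • q) ∂(ν t)) + χ t * (∫ x, g₂ (x - t • q) ∂(ν t)) := by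
    intro t
    haveI := hfin t
    rw [show (fun x => deriv (fun s => f (s, x)) t)
        = fun x : ℝ × ℝ => h t * g (x - t • q) + χ t * g₂ (x - t • q) from
      funext fun x => hderiv t x]
    rw [integral_add ((hxint g hgc hgs t).const_mul _) ((hxint g₂ hg₂c hg₂s t).const_mul _),
      integral_const_mul, integral_const_mul]
  have hI2 : ∀ t : ℝ, (∫ x, fderiv ℝ (fun y => f (t, y)) x q ∂(ν t))
      = -(χ t * (∫ x, g₂ (x - t • q) ∂(ν t))) := by
    intro t
    haveI := hfin t
    rw [show (fun x => fderiv ℝ (fun y => f (t, y)) x q)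
        = fun x : ℝ × ℝ => -(χ t * g₂ (x - t • q)) from funext fun x => hfderiv t x]
    rw [integral_neg, integral_const_mul]
  have hw := hweak f hf1 hf2 hf3
  simp only [hI1, hI2] at hw
  -- pass to indicator versions
  set G : ℝ → ℝ := fun t => ∫ x, g (x - t • q) ∂(ν t) with hGdef
  set G₂ : ℝ → ℝ := fun t => ∫ x, g₂ (x - t • q) ∂(ν t) with hG₂def2
  set Gi : ℝ → ℝ := Set.indicator (Set.Ioi 0) G with hGidef
  set G₂i : ℝ → ℝ := Set.indicator (Set.Ioi 0) G₂ with hG₂idef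
  have e1 : (∫ t in Set.Ioi (0:ℝ), (h t * G t + χ t * G₂ t))
      = ∫ t in Set.Ioi (0:ℝ), (h t * Gi t + χ t * G₂i t) := by
    refine setIntegral_congr_fun measurableSet_Ioi fun t ht => ?_
    simp [hGidef, hG₂idef, Set.indicator_of_mem ht]
  have e2 : (∫ t in Set.Ioi (0:ℝ), -(χ t * G₂ t))
      = ∫ t in Set.Ioi (0:ℝ), -(χ t * G₂i t) := by
    refine setIntegral_congr_fun measurableSet_Ioi fun t ht => ?_
    simp [hG₂idef, Set.indicator_of_mem ht]
  have hG₂c' : ContinuousOn G₂ (Set.Ioi 0) := hG₂c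
  have c1 : Continuous fun t => h t * Gi t := cont_mul_indicator hh hhsupp hGc
  have c2 : Continuous fun t => χ t * G₂i t := cont_mul_indicator hχc hχsupp hG₂c'
  have i1 : Integrable (fun t => h t * Gi t) volume :=
    c1.integrable_of_hasCompactSupport (hhs.mul_right)
  have i2 : Integrable (fun t => χ t * G₂i t) volume :=
    c2.integrable_of_hasCompactSupport (hχs.mul_right)
  have hw2 : (∫ t in Set.Ioi (0:ℝ), (h t * Gi t + χ t * G₂i t))
      + ∫ t in Set.Ioi (0:ℝ), -(χ t * G₂i t) = 0 := by
    rw [← e1, ← e2]; exact hw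
  have i12 : Integrable (fun t => h t * Gi t + χ t * G₂i t) volume := i1.add i2
  have i2n : Integrable (fun t => -(χ t * G₂i t)) volume := i2.neg
  have hsum := integral_add (i12.integrableOn (s := Set.Ioi 0)) (i2n.integrableOn (s := Set.Ioi 0))
  simp only [add_neg_cancel_right] at hsum
  have h3 : (∫ t in Set.Ioi (0:ℝ), h t * Gi t) = 0 := hsum.trans hw2
  rw [← setIntegral_eq_integral_of_forall_compl_eq_zero
    (s := Set.Ioi (0:ℝ)) (fun t ht => by simp [hGidef, Set.indicator_of_notMem ht])]
  exact h3

lemma bump_shift (φ : ContDiffBump (0:ℝ)) (c : ℝ) (hc : 0 < c - φ.rOut) :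
    HasCompactSupport (fun u => φ.normed volume (u - c)) ∧
      tsupport (fun u => φ.normed volume (u - c)) ⊆ Set.Ioi 0 := by
  have hsup : Function.support (fun u => φ.normed volume (u - c))
      ⊆ Set.Icc (c - φ.rOut) (c + φ.rOut) := by
    intro u hu
    have h1 : u - c ∈ Function.support (φ.normed volume) := hu
    rw [φ.support_normed_eq] at h1
    have h2 := abs_lt.1 (by simpa [Real.norm_eq_abs] using mem_ball_zero_iff.1 h1)
    exact ⟨by linarith [h2.1], by linarith [h2.2]⟩
  have hts : tsupport (fun u => φ.normed volume (u - c))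
      ⊆ Set.Icc (c - φ.rOut) (c + φ.rOut) := closure_minimal hsup isClosed_Icc
  exact ⟨IsCompact.of_isClosed_subset isCompact_Icc (isClosed_tsupport _) hts,
    fun u hu => lt_of_lt_of_le hc (by linarith [(hts hu).1, (hts hu).2])⟩

end TransportUnique

open TransportUnique

/-- uniqueness for the homogeneous transport equation. If `(ν_t)_{t≥0}`
is a family of finite Borel measures on `ℝ²`, weakly continuous in `t` on `[0,∞)`, with
`ν_0 = 0`, and such that
`∫₀^∞ ∫ ∂_t f dν_t dt + ∫₀^∞ ∫ q·∇_x f dν_t dt = 0`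
for every `C¹` function `f : ℝ × (ℝ²) → ℝ` with compact support contained in `(0,∞) × ℝ²`,
then `ν_t = 0` for all `t ≥ 0`. -/
theorem homogeneous_transport_equation_uniqueness
    (q : ℝ × ℝ)
    (ν : ℝ → Measure (ℝ × ℝ)) (hfin : ∀ t, IsFiniteMeasure (ν t))
    (hcont : ∀ g : BoundedContinuousFunction (ℝ × ℝ) ℝ,
      ContinuousOn (fun t : ℝ => ∫ x, g x ∂(ν t)) (Set.Ici 0))
    (hzero : ν 0 = 0)
    (hweak : ∀ f : ℝ × (ℝ × ℝ) → ℝ, ContDiff ℝ 1 f → HasCompactSupport f →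
      tsupport f ⊆ Set.Ioi (0 : ℝ) ×ˢ Set.univ →
      (∫ t in Set.Ioi (0 : ℝ), ∫ x, deriv (fun s => f (s, x)) t ∂(ν t))
        + (∫ t in Set.Ioi (0 : ℝ), ∫ x, fderiv ℝ (fun y => f (t, y)) x q ∂(ν t)) = 0) :
    ∀ t : ℝ, 0 ≤ t → ν t = 0 := by
  intro t₀ ht₀
  rcases eq_or_lt_of_le ht₀ with h0 | h0
  · rw [← h0]; exact hzero
  -- core claim: every C¹ compactly supported test integrates to zero at time t₀
  have core : ∀ g : (ℝ × ℝ) → ℝ, ContDiff ℝ 1 g → HasCompactSupport g →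
      (∫ x, g (x - t₀ • q) ∂(ν t₀)) = 0 := by
    intro g hg hgs
    set G : ℝ → ℝ := fun t => ∫ x, g (x - t • q) ∂(ν t) with hGdef
    set Gi : ℝ → ℝ := Set.indicator (Set.Ioi 0) G with hGidef
    have hGcI : ContinuousOn G (Set.Ici 0) := contG q ν hfin hcont g hg.continuous hgs
    have hG0 : G 0 = 0 := by
      simp only [hGdef]
      rw [hzero]
      simp
    have hGi0 : Gi 0 = 0 := by
      simp only [hGidef]
      rw [Set.indicator_of_notMem (by simp : (0:ℝ) ∉ Set.Ioi (0:ℝ))]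
    have hGit₀ : Gi t₀ = G t₀ := Set.indicator_of_mem (Set.mem_Ioi.2 h0) G
    -- auxiliary test function g₂
    have hgd : Differentiable ℝ g := hg.differentiable one_ne_zero
    set g₂ : (ℝ × ℝ) → ℝ := fun y => fderiv ℝ g y (-q) with hg₂def
    have hg₂c : Continuous g₂ := (hg.continuous_fderiv one_ne_zero).clm_apply continuous_const
    have hg₂s : HasCompactSupport g₂ := by
      have hsub : tsupport g₂ ⊆ tsupport g := by
        apply closure_minimal _ (isClosed_tsupport g)
        intro y hy
        have : fderiv ℝ g y ≠ 0 := fun hzero' => hy (by simp [hg₂def, hzero'])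
        exact support_fderiv_subset ℝ this
      exact IsCompact.of_isClosed_subset hgs (isClosed_tsupport g₂) hsub
    have hGc : ContinuousOn G (Set.Ioi 0) := hGcI.mono Set.Ioi_subset_Ici_self
    have hG₂c : ContinuousOn (fun t : ℝ => ∫ x, fderiv ℝ g (x - t • q) (-q) ∂(ν t))
        (Set.Ioi 0) :=
      (contG q ν hfin hcont g₂ hg₂c hg₂s).mono Set.Ioi_subset_Ici_self
    -- smallness
    have hsmall : ∀ δ : ℝ, 0 < δ → |G t₀| ≤ 2 * δ := by
      intro δ hδ
      have hct₀ : ContinuousAt G t₀ := hGcI.continuousAt (Ici_mem_nhds h0)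
      obtain ⟨ηb, hηb, hηb'⟩ := Metric.continuousAt_iff.1 hct₀ δ hδ
      obtain ⟨ηa, hηa, hηa'⟩ := Metric.continuousWithinAt_iff.1 (hGcI 0 Set.self_mem_Ici) δ hδ
      set a : ℝ := min (min (ηa / 4) (ηb / 2)) (t₀ / 2) with hadef
      have ha0 : 0 < a := by
        simp only [hadef, lt_min_iff]
        exact ⟨⟨by linarith, by linarith⟩, by linarith⟩
      have ha1 : a ≤ ηa / 4 := (min_le_left _ _).trans (min_le_left _ _)
      have ha2 : a ≤ ηb / 2 := (min_le_left _ _).trans (min_le_right _ _)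
      have ha3 : a ≤ t₀ / 2 := min_le_right _ _
      set φ : ContDiffBump (0:ℝ) := ⟨a/4, a/2, by positivity, by linarith⟩ with hφdef
      have hφr : φ.rOut = a/2 := rfl
      obtain ⟨χ, hχd, hχs, hχsupp⟩ := chi_package φ a t₀
        (by rw [hφr]; linarith) (by linarith)
      set ρ : ℝ → ℝ := φ.normed volume with hρdef
      set h : ℝ → ℝ := fun u => ρ (u - a) - ρ (u - t₀) with hhdef
      have hρc : Continuous ρ := φ.continuous_normed
      have hhc : Continuous h := (hρc.comp (continuous_id.sub continuous_const)).sub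
        (hρc.comp (continuous_id.sub continuous_const))
      obtain ⟨hsa, hsa'⟩ := bump_shift φ a (by rw [hφr]; linarith)
      obtain ⟨hsb, hsb'⟩ := bump_shift φ t₀ (by rw [hφr]; linarith)
      have hsup : Function.support h
          ⊆ tsupport (fun u => ρ (u - a)) ∪ tsupport (fun u => ρ (u - t₀)) := by
        intro u hu
        by_contra hnot
        rw [Set.mem_union, not_or] at hnot
        apply hu
        have z1 : ρ (u - a) = 0 :=
          image_eq_zero_of_notMem_tsupport (f := fun u => ρ (u - a)) hnot.1
        have z2 : ρ (u - t₀) = 0 :=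
          image_eq_zero_of_notMem_tsupport (f := fun u => ρ (u - t₀)) hnot.2
        simp [hhdef, z1, z2]
      have hts2 : tsupport h
          ⊆ tsupport (fun u => ρ (u - a)) ∪ tsupport (fun u => ρ (u - t₀)) :=
        closure_minimal hsup ((isClosed_tsupport _).union (isClosed_tsupport _))
      have hhs : HasCompactSupport h :=
        IsCompact.of_isClosed_subset (hsa.union hsb) (isClosed_tsupport _) hts2
      have hhsupp : tsupport h ⊆ Set.Ioi 0 :=
        hts2.trans (Set.union_subset hsa' hsb')
      -- apply key identity
      have hkey := key q ν hfin hweak g hg hgs χ h hhc hhs hχd hχs hχsupp hhsupp hGc hG₂c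
      -- split the integral
      have cA : Continuous fun u => ρ (u - a) * Gi u :=
        cont_mul_indicator (hρc.comp (continuous_id.sub continuous_const)) hsa' hGc
      have cB : Continuous fun u => ρ (u - t₀) * Gi u :=
        cont_mul_indicator (hρc.comp (continuous_id.sub continuous_const)) hsb' hGc
      have iA : Integrable (fun u => ρ (u - a) * Gi u) volume :=
        cA.integrable_of_hasCompactSupport hsa.mul_right
      have iB : Integrable (fun u => ρ (u - t₀) * Gi u) volume :=
        cB.integrable_of_hasCompactSupport hsb.mul_right
      have hfe : (fun u => h u * Gi u)
          = fun u => ρ (u - a) * Gi u - ρ (u - t₀) * Gi u := funext fun u => by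
        simp only [hhdef]; ring
      rw [hfe, integral_sub iA iB] at hkey
      have hAB : (∫ u, ρ (u - a) * Gi u) = ∫ u, ρ (u - t₀) * Gi u := by linarith
      -- mollifier estimates
      have estA : |(∫ u, ρ (u - a) * Gi u) - Gi 0| ≤ δ := by
        refine moll_est φ a 0 (ηa / 2) δ hδ.le Gi iA ?_ ?_
        · intro u hu
          rw [hGi0, sub_zero]
          by_cases hu0 : u ∈ Set.Ioi (0:ℝ)
          · rw [hGidef, Set.indicator_of_mem hu0]
            have hd : dist u 0 < ηa := by
              rw [Real.dist_eq, sub_zero]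
              calc |u| = |u - 0| := by rw [sub_zero]
                _ ≤ ηa / 2 := hu
                _ < ηa := by linarith
            have := hηa' (Set.mem_Ici.2 (le_of_lt hu0)) hd
            rw [Real.dist_eq, hG0, sub_zero] at this
            exact this.le
          · rw [hGidef, Set.indicator_of_notMem hu0, abs_zero]
            exact hδ.le
        · rw [hφr, sub_zero, abs_of_pos ha0]
          linarith
      have estB : |(∫ u, ρ (u - t₀) * Gi u) - Gi t₀| ≤ δ := by
        refine moll_est φ t₀ t₀ (min (ηb / 2) (t₀ / 2)) δ hδ.le Gi iB ?_ ?_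
        · intro u hu
          have hu1 : |u - t₀| ≤ ηb / 2 := hu.trans (min_le_left _ _)
          have hu2 : |u - t₀| ≤ t₀ / 2 := hu.trans (min_le_right _ _)
          have hu0 : u ∈ Set.Ioi (0:ℝ) := by
            have := abs_le.1 hu2
            simp only [Set.mem_Ioi]
            linarith [this.1]
          rw [hGidef, Set.indicator_of_mem hu0, Set.indicator_of_mem (Set.mem_Ioi.2 h0)]
          have hd : dist u t₀ < ηb := by
            rw [Real.dist_eq]
            linarith
          have := hηb' hd
          rw [Real.dist_eq] at this
          exact this.le
        · rw [hφr, sub_self, abs_zero, zero_add, le_min_iff]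
          constructor <;> linarith
      rw [hGi0, sub_zero] at estA
      rw [hGit₀] at estB
      have h1 : |G t₀| ≤ |(∫ u, ρ (u - t₀) * Gi u) - G t₀| + |∫ u, ρ (u - t₀) * Gi u| := by
        have := abs_sub_le (G t₀) (∫ u, ρ (u - t₀) * Gi u) 0
        rw [sub_zero, abs_sub_comm] at this
        simpa using this
      rw [← hAB] at h1
      calc |G t₀| ≤ |(∫ u, ρ (u - a) * Gi u) - G t₀| + |∫ u, ρ (u - a) * Gi u| := by
            rw [hAB] at h1 ⊢; exact h1
        _ ≤ 2 * δ := by rw [hAB]; rw [← hAB] at estB ⊢; linarith [estA, estB]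
    have habs : |G t₀| ≤ 0 := by
      refine le_of_forall_pos_le_add fun ε hε => ?_
      have := hsmall (ε / 2) (by linarith)
      linarith
    have : G t₀ = 0 := abs_nonpos_iff.1 habs
    simpa [hGdef] using this
  -- conclude ν t₀ = 0
  haveI := hfin t₀
  have hball : ∀ n : ℕ, ν t₀ (Metric.closedBall 0 ((n:ℝ)+1)) = 0 := by
    intro n
    set ψ : ContDiffBump (0 : ℝ × ℝ) := ⟨(n:ℝ)+1, (n:ℝ)+2, by positivity, by linarith⟩
      with hψdef
    have hint0 : (∫ x, ψ x ∂(ν t₀)) = 0 := by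
      have hc : ContDiff ℝ 1 (fun y : ℝ × ℝ => ψ (y + t₀ • q)) :=
        ψ.contDiff.comp (contDiff_id.add contDiff_const)
      have hcs : HasCompactSupport (fun y : ℝ × ℝ => ψ (y + t₀ • q)) :=
        ψ.hasCompactSupport.comp_isClosedEmbedding
          (Homeomorph.addRight (t₀ • q)).isClosedEmbedding
      have := core (fun y => ψ (y + t₀ • q)) hc hcs
      simpa using this
    have hψint : Integrable (⇑ψ) (ν t₀) :=
      ψ.continuous.integrable_of_hasCompactSupport ψ.hasCompactSupport
    have h2 : (∫ x in Metric.closedBall (0:ℝ×ℝ) ((n:ℝ)+1), ψ x ∂(ν t₀))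
        = ((ν t₀) (Metric.closedBall 0 ((n:ℝ)+1))).toReal := by
      rw [setIntegral_congr_fun measurableSet_closedBall
        (fun x hx => ψ.one_of_mem_closedBall hx)]
      simp
      rfl
    have h1 : (∫ x in Metric.closedBall (0:ℝ×ℝ) ((n:ℝ)+1), ψ x ∂(ν t₀))
        ≤ ∫ x, ψ x ∂(ν t₀) :=
      setIntegral_le_integral hψint (Filter.Eventually.of_forall fun x => ψ.nonneg)
    have hle : ((ν t₀) (Metric.closedBall 0 ((n:ℝ)+1))).toReal ≤ 0 := by
      rw [← h2]; rw [hint0] at h1; exact h1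
    have := le_antisymm hle ENNReal.toReal_nonneg
    exact ((ENNReal.toReal_eq_zero_iff _).1 this).resolve_right (measure_ne_top _ _)
  have huniv : ν t₀ Set.univ = 0 := by
    have hcover : (Set.univ : Set (ℝ × ℝ)) ⊆ ⋃ n : ℕ, Metric.closedBall 0 ((n:ℝ)+1) := by
      intro x _
      obtain ⟨n, hn⟩ := exists_nat_ge ‖x‖
      exact Set.mem_iUnion.2 ⟨n, by
        rw [Metric.mem_closedBall, dist_zero_right]
        linarith⟩
    refine le_antisymm ((measure_mono hcover).trans (le_of_eq ?_)) (by simp)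
    exact measure_iUnion_null fun n => hball n
  exact MeasureTheory.Measure.measure_univ_eq_zero.1 huniv
end

section
/- Hydrodynamic limit (integrated form): for every bounded continuous f : ℝ² → ℝ and every t ≥ 0, lim_{h → 0⁺} α h Σ_{m=1}^{⌊t/h⌋} E[f(e + h X_m)] = α ∫₀^t f(e + q s) ds, where X_n = ξ₁ + ⋯ + ξ_n is the nearest-neighbor random walk started at 0 and q = (p₁ − p₃, p₂ − p₄). Equivalently, the measures μ^h_t defined by ∫ f dμ^h_t = α h Σ_{m=1}^{⌊t/h⌋} E f(e + h X_m) converge weakly, as h → 0, to μ_t = α ∫₀^t δ_{e+qs} ds for each fixed t. -/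
open MeasureTheory ProbabilityTheory Filter
open scoped ENNReal NNReal

/-- The four nearest-neighbor steps on `ℤ²`: `e₁ = (1,0)`, `e₂ = (0,1)`, `e₃ = (-1,0)`,
`e₄ = (0,-1)`. -/
def stepDir : Fin 4 → ℤ × ℤ
  | 0 => (1, 0)
  | 1 => (0, 1)
  | 2 => (-1, 0)
  | 3 => (0, -1)
noncomputable def castPair : ℤ × ℤ → ℝ × ℝ := fun z => ((z.1 : ℝ), (z.2 : ℝ))

lemma castPair_measurable : Measurable castPair := by
  exact Measurable.prod ((measurable_from_top (β := ℝ) (f := (Int.cast : ℤ → ℝ))).comp measurable_fst)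
    ((measurable_from_top (β := ℝ) (f := (Int.cast : ℤ → ℝ))).comp measurable_snd)

lemma stepDir_injective : Function.Injective stepDir := by decide

lemma hydro_law {Ω : Type*} [MeasurableSpace Ω] (P : Measure Ω) [IsProbabilityMeasure P]
    (p : Fin 4 → ℝ) (hp : ∀ l, 0 ≤ p l) (hsum : ∑ l, p l = 1)
    (ξ0 : Ω → ℤ × ℤ) (hm : Measurable ξ0)
    (hlaw : ∀ l, P {ω | ξ0 ω = stepDir l} = ENNReal.ofReal (p l)) :
    Measure.map ξ0 P = ∑ l, ENNReal.ofReal (p l) • Measure.dirac (stepDir l) := by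
  have hrange : P (⋃ l, {ω | ξ0 ω = stepDir l}) = 1 := by
    rw [measure_iUnion]
    · rw [tsum_fintype]
      simp only [hlaw]
      rw [← ENNReal.ofReal_sum_of_nonneg (fun l _ => hp l), hsum, ENNReal.ofReal_one]
    · intro i j hij
      refine Set.disjoint_left.2 fun ω hi hj => hij (stepDir_injective ?_)
      exact hi.symm.trans hj
    · exact fun l => hm (measurableSet_singleton (stepDir l))
  have hout : ∀ a : ℤ × ℤ, a ∉ Set.range stepDir → P {ω | ξ0 ω = a} = 0 := by
    intro a ha
    have hsub : {ω | ξ0 ω = a} ⊆ (⋃ l, {ω | ξ0 ω = stepDir l})ᶜ := by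
      intro ω hω hmem
      simp only [Set.mem_iUnion, Set.mem_setOf_eq] at hmem
      obtain ⟨l, hl⟩ := hmem
      exact ha ⟨l, by rw [← hl, hω]⟩
    refine le_antisymm (le_trans (measure_mono hsub) ?_) zero_le
    have hcompl : P (⋃ l, {ω | ξ0 ω = stepDir l})ᶜ = 0 := by
      have hms : MeasurableSet (⋃ l, {ω | ξ0 ω = stepDir l}) :=
        MeasurableSet.iUnion fun l => hm (measurableSet_singleton (stepDir l))
      rw [measure_compl hms (measure_ne_top P _), hrange, measure_univ]
      simp
    exact le_of_eq hcompl
  refine Measure.ext_iff_singleton.2 fun a => ?_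
  rw [Measure.map_apply hm (measurableSet_singleton a)]
  have hRHS : (∑ l, ENNReal.ofReal (p l) • Measure.dirac (stepDir l)) {a}
      = ∑ l, ENNReal.ofReal (p l) * (Measure.dirac (stepDir l) {a}) := by
    rw [Measure.finset_sum_apply]
    simp [Measure.smul_apply, smul_eq_mul]
  rw [hRHS]
  by_cases ha : a ∈ Set.range stepDir
  · obtain ⟨l₀, rfl⟩ := ha
    have : ξ0 ⁻¹' {stepDir l₀} = {ω | ξ0 ω = stepDir l₀} := rfl
    rw [this, hlaw]
    rw [Finset.sum_eq_single_of_mem l₀ (Finset.mem_univ _)]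
    · simp [Measure.dirac_apply]
    · intro l _ hl
      have : stepDir l ≠ stepDir l₀ := fun h => hl (stepDir_injective h)
      simp [Measure.dirac_apply, this]
  · have : ξ0 ⁻¹' {a} = {ω | ξ0 ω = a} := rfl
    rw [this, hout a ha]
    symm
    refine Finset.sum_eq_zero fun l _ => ?_
    have : stepDir l ≠ a := fun h => ha ⟨l, h⟩
    simp [Measure.dirac_apply, this]

lemma hydro_bound {Ω : Type*} [MeasurableSpace Ω] (P : Measure Ω) [IsProbabilityMeasure P]
    (p : Fin 4 → ℝ) (hp : ∀ l, 0 ≤ p l) (hsum : ∑ l, p l = 1)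
    (ξ0 : Ω → ℤ × ℤ) (hm : Measurable ξ0)
    (hlaw : ∀ l, P {ω | ξ0 ω = stepDir l} = ENNReal.ofReal (p l)) :
    ∀ᵐ ω ∂P, ‖castPair (ξ0 ω)‖ ≤ 1 := by
  have hrange : P (⋃ l, {ω | ξ0 ω = stepDir l}) = 1 := by
    rw [measure_iUnion]
    · rw [tsum_fintype]
      simp only [hlaw]
      rw [← ENNReal.ofReal_sum_of_nonneg (fun l _ => hp l), hsum, ENNReal.ofReal_one]
    · intro i j hij
      refine Set.disjoint_left.2 fun ω hi hj => hij ?_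
      have : stepDir i = stepDir j := hi.symm.trans hj
      revert this
      have : Function.Injective stepDir := by decide
      exact fun h => this h
    · exact fun l => hm (measurableSet_singleton (stepDir l))
  have : ∀ᵐ ω ∂P, ω ∈ ⋃ l, {ω | ξ0 ω = stepDir l} := by
    rw [ae_iff]
    have hms : MeasurableSet (⋃ l, {ω | ξ0 ω = stepDir l}) :=
      MeasurableSet.iUnion fun l => hm (measurableSet_singleton (stepDir l))
    have : {ω | ¬ ω ∈ ⋃ l, {ω | ξ0 ω = stepDir l}} = (⋃ l, {ω | ξ0 ω = stepDir l})ᶜ := rfl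
    rw [this, measure_compl hms (measure_ne_top P _), hrange, measure_univ]
    simp
  filter_upwards [this] with ω hω
  simp only [Set.mem_iUnion, Set.mem_setOf_eq] at hω
  obtain ⟨l, hl⟩ := hω
  rw [hl]
  fin_cases l <;> simp [castPair, stepDir, Prod.norm_def]

lemma hydro_mean {Ω : Type*} [MeasurableSpace Ω] (P : Measure Ω) [IsProbabilityMeasure P]
    (p : Fin 4 → ℝ) (hp : ∀ l, 0 ≤ p l)
    (ξ0 : Ω → ℤ × ℤ) (hm : Measurable ξ0)
    (hlawmap : Measure.map ξ0 P = ∑ l, ENNReal.ofReal (p l) • Measure.dirac (stepDir l)) :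
    ∫ ω, castPair (ξ0 ω) ∂P = (p 0 - p 2, p 1 - p 3) := by
  have h1 : ∫ ω, castPair (ξ0 ω) ∂P = ∫ z, castPair z ∂(Measure.map ξ0 P) := by
    rw [integral_map hm.aemeasurable castPair_measurable.aestronglyMeasurable]
  rw [h1, hlawmap]
  rw [integral_finset_sum_measure]
  · simp only [integral_smul_measure, integral_dirac]
    rw [Fin.sum_univ_four]
    simp only [ENNReal.toReal_ofReal (hp 0), ENNReal.toReal_ofReal (hp 1),
      ENNReal.toReal_ofReal (hp 2), ENNReal.toReal_ofReal (hp 3)]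
    simp [castPair, stepDir, Prod.ext_iff, Prod.smul_def]
    constructor <;> ring
  · intro l _
    refine Integrable.smul_measure ?_ ENNReal.ofReal_ne_top
    refine ⟨castPair_measurable.aestronglyMeasurable, ?_⟩
    simp [HasFiniteIntegral, lintegral_dirac]

lemma hydro_omega (f : ℝ × ℝ → ℝ) (hf : Continuous f) (C : ℝ) (hC : ∀ x, |f x| ≤ C)
    (e q : ℝ × ℝ) (t : ℝ) (ht : 0 ≤ t) (S : ℕ → ℝ × ℝ)
    (hS : Tendsto (fun n : ℕ => (n : ℝ)⁻¹ • S n) atTop (nhds q)) :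
    Tendsto (fun h : ℝ => h * ∑ m ∈ Finset.Icc 1 (Nat.floor (t / h)), f (e + h • S m))
      (nhdsWithin 0 (Set.Ioi 0)) (nhds (∫ s in Set.Ioc (0:ℝ) t, f (e + s • q))) := by
  have hC0 : 0 ≤ C := (abs_nonneg _).trans (hC e)
  set Φ : ℝ → ℝ → ℝ := fun h s => f (e + h • S (Nat.ceil (s / h))) with hΦ
  set F : ℝ → ℝ → ℝ := fun h =>
    (Set.Ioc (0:ℝ) ((Nat.floor (t / h) : ℝ) * h)).indicator (Φ h) with hF
  have hΦmeas : ∀ h : ℝ, Measurable (Φ h) := by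
    intro h
    exact hf.measurable.comp <| measurable_const.add <|
      (measurable_from_top (f := fun n : ℕ => h • S n)).comp <|
        Nat.measurable_ceil.comp (measurable_id.div_const h)
  -- Key identity for h > 0
  have hident : ∀ h : ℝ, 0 < h →
      h * ∑ m ∈ Finset.Icc 1 (Nat.floor (t / h)), f (e + h • S m)
        = ∫ s in Set.Ioc (0:ℝ) t, F h s := by
    intro h hh
    set N := Nat.floor (t / h) with hN
    have hNh0 : (0:ℝ) ≤ (N : ℝ) * h := mul_nonneg (Nat.cast_nonneg _) hh.le
    have hNht : (N : ℝ) * h ≤ t := by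
      rw [← le_div_iff₀ hh]
      exact Nat.floor_le (div_nonneg ht hh.le)
    have step1 : ∫ s in Set.Ioc (0:ℝ) t, F h s = ∫ s in Set.Ioc (0:ℝ) ((N:ℝ)*h), Φ h s := by
      rw [hF]
      rw [setIntegral_indicator measurableSet_Ioc]
      congr 1
      rw [Set.Ioc_inter_Ioc]
      simp [hN, min_eq_right (show ((Nat.floor (t / h) : ℕ) : ℝ) * h ≤ t from hNht)]
    have hpiece : ∀ k : ℕ, IntervalIntegrable (Φ h) volume ((k:ℝ)*h) (((k+1:ℕ):ℝ)*h) := by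
      intro k
      rw [intervalIntegrable_iff]
      exact Measure.integrableOn_of_bounded (M := C) measure_Ioc_lt_top.ne
        (hΦmeas h).aestronglyMeasurable
        (Filter.Eventually.of_forall fun s => (Real.norm_eq_abs _) ▸ hC _)
    have step3 : ∫ s in (0:ℝ)..((N:ℝ)*h), Φ h s
        = ∑ k ∈ Finset.range N, ∫ s in ((k:ℝ)*h)..(((k+1:ℕ):ℝ)*h), Φ h s := by
      have := intervalIntegral.sum_integral_adjacent_intervals
        (a := fun k : ℕ => (k:ℝ)*h) (n := N) (μ := volume) (f := Φ h)
        (fun k _ => hpiece k)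
      simpa using this.symm
    have step4 : ∀ k : ℕ, (∫ s in ((k:ℝ)*h)..(((k+1:ℕ):ℝ)*h), Φ h s)
        = h * f (e + h • S (k+1)) := by
      intro k
      have hkk : (k:ℝ)*h ≤ ((k+1:ℕ):ℝ)*h := by
        apply mul_le_mul_of_nonneg_right _ hh.le
        push_cast; linarith
      rw [intervalIntegral.integral_of_le hkk]
      have hcongr : ∀ s ∈ Set.Ioc ((k:ℝ)*h) (((k+1:ℕ):ℝ)*h),
          Φ h s = f (e + h • S (k+1)) := by
        intro s hs
        have h1 : Nat.ceil (s / h) = k + 1 := by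
          rw [Nat.ceil_eq_iff (Nat.succ_ne_zero k)]
          constructor
          · have hc : ((k+1-1 : ℕ):ℝ) = (k:ℝ) := by simp
            rw [hc, lt_div_iff₀ hh]
            exact hs.1
          · rw [div_le_iff₀ hh]
            exact_mod_cast hs.2
        rw [hΦ]
        simp only [h1]
      rw [setIntegral_congr_fun measurableSet_Ioc hcongr, setIntegral_const, measureReal_def, Real.volume_Ioc]
      have : ((k+1:ℕ):ℝ)*h - (k:ℝ)*h = h := by push_cast; ring
      rw [this, ENNReal.toReal_ofReal hh.le]
      simp [smul_eq_mul]
    have step5 : ∑ m ∈ Finset.Icc 1 N, f (e + h • S m)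
        = ∑ k ∈ Finset.range N, f (e + h • S (k+1)) := by
      induction N with
      | zero => simp
      | succ n ih =>
        rw [Finset.sum_Icc_succ_top (Nat.le_add_left 1 n), Finset.sum_range_succ, ih]
    rw [step1, ← intervalIntegral.integral_of_le hNh0, step3]
    rw [step5, Finset.mul_sum]
    exact (Finset.sum_congr rfl fun k _ => step4 k).symm
  -- Dominated convergence
  have hDCT : Tendsto (fun h : ℝ => ∫ s in Set.Ioc (0:ℝ) t, F h s)
      (nhdsWithin 0 (Set.Ioi 0)) (nhds (∫ s in Set.Ioc (0:ℝ) t, f (e + s • q))) := by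
    apply tendsto_integral_filter_of_dominated_convergence (bound := fun _ => C)
    · exact Filter.Eventually.of_forall fun h =>
        (((hΦmeas h).indicator measurableSet_Ioc).aestronglyMeasurable)
    · refine Filter.Eventually.of_forall fun h => Filter.Eventually.of_forall fun s => ?_
      rw [Real.norm_eq_abs]
      simp only [hF]
      by_cases hs : s ∈ Set.Ioc (0:ℝ) ((Nat.floor (t / h) : ℝ) * h)
      · rw [Set.indicator_of_mem hs]; exact hC _
      · rw [Set.indicator_of_notMem hs]; simpa using hC0
    · exact integrableOn_const measure_Ioc_lt_top.ne
    · -- a.e. pointwise convergence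
      have h1 : ∀ᵐ s ∂(volume.restrict (Set.Ioc (0:ℝ) t)), s ∈ Set.Ioc (0:ℝ) t :=
        ae_restrict_mem measurableSet_Ioc
      have h2 : ∀ᵐ s ∂(volume.restrict (Set.Ioc (0:ℝ) t)), s ≠ t := by
        refine ae_restrict_of_ae ?_
        rw [ae_iff]
        have : {s : ℝ | ¬ s ≠ t} = {t} := by ext s; simp
        rw [this]
        exact Real.volume_singleton
      filter_upwards [h1, h2] with s hs hst
      have hs0 : 0 < s := hs.1
      have hst' : s < t := lt_of_le_of_ne hs.2 hst
      -- show F h s = Φ h s eventually and Φ h s → f (e + s • q)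
      have hdiv : Tendsto (fun h : ℝ => s / h) (nhdsWithin 0 (Set.Ioi 0)) atTop := by
        have := Filter.Tendsto.const_mul_atTop hs0 tendsto_inv_nhdsGT_zero
        simpa [div_eq_mul_inv] using this
      have hceil : Tendsto (fun h : ℝ => Nat.ceil (s / h)) (nhdsWithin 0 (Set.Ioi 0)) atTop :=
        tendsto_nat_ceil_atTop.comp hdiv
      have hcomp : Tendsto (fun h : ℝ => ((Nat.ceil (s / h) : ℝ))⁻¹ • S (Nat.ceil (s / h)))
          (nhdsWithin 0 (Set.Ioi 0)) (nhds q) := hS.comp hceil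
      have hscal : Tendsto (fun h : ℝ => h * (Nat.ceil (s / h) : ℝ))
          (nhdsWithin 0 (Set.Ioi 0)) (nhds s) := by
        have hup : Tendsto (fun h : ℝ => s + h) (nhdsWithin 0 (Set.Ioi 0)) (nhds s) := by
          have : Tendsto (fun h : ℝ => s + h) (nhds 0) (nhds (s + 0)) :=
            (continuous_const.add continuous_id).tendsto 0
          simpa using this.mono_left nhdsWithin_le_nhds
        refine tendsto_of_tendsto_of_tendsto_of_le_of_le' tendsto_const_nhds hup ?_ ?_
        · filter_upwards [self_mem_nhdsWithin] with h hh
          rw [Set.mem_Ioi] at hh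
          calc s = h * (s / h) := by field_simp
          _ ≤ h * (Nat.ceil (s / h) : ℝ) :=
            mul_le_mul_of_nonneg_left (Nat.le_ceil _) hh.le
        · filter_upwards [self_mem_nhdsWithin] with h hh
          rw [Set.mem_Ioi] at hh
          have : (Nat.ceil (s / h) : ℝ) < s / h + 1 :=
            Nat.ceil_lt_add_one (div_nonneg hs0.le hh.le)
          calc h * (Nat.ceil (s / h) : ℝ) ≤ h * (s / h + 1) :=
                mul_le_mul_of_nonneg_left this.le hh.le
          _ = s + h := by
                field_simp
      have hsm : Tendsto (fun h : ℝ => h • S (Nat.ceil (s / h)))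
          (nhdsWithin 0 (Set.Ioi 0)) (nhds (s • q)) := by
        refine (hscal.smul hcomp).congr' ?_
        filter_upwards [self_mem_nhdsWithin] with h hh
        rw [Set.mem_Ioi] at hh
        have hcne : ((Nat.ceil (s / h) : ℝ)) ≠ 0 := by
          have : 0 < Nat.ceil (s / h) := Nat.ceil_pos.2 (div_pos hs0 hh)
          exact_mod_cast this.ne'
        rw [smul_smul, mul_assoc, mul_inv_cancel₀ hcne, mul_one]
      have hΦtend : Tendsto (fun h : ℝ => Φ h s) (nhdsWithin 0 (Set.Ioi 0))
          (nhds (f (e + s • q))) :=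
        (hf.tendsto (e + s • q)).comp (tendsto_const_nhds.add hsm)
      refine hΦtend.congr' ?_
      have hev : Set.Ioo (0:ℝ) (t - s) ∈ nhdsWithin (0:ℝ) (Set.Ioi 0) :=
        Ioo_mem_nhdsGT_of_mem ⟨le_refl _, by linarith⟩
      filter_upwards [hev] with h hh
      obtain ⟨hh0, hhts⟩ := hh
      have hmem : s ∈ Set.Ioc (0:ℝ) ((Nat.floor (t / h) : ℝ) * h) := by
        refine ⟨hs0, ?_⟩
        have h1 : t / h - 1 < (Nat.floor (t / h) : ℝ) := Nat.sub_one_lt_floor _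
        have h2 : (t / h - 1) * h < (Nat.floor (t / h) : ℝ) * h :=
          mul_lt_mul_of_pos_right h1 hh0
        have h3 : (t / h - 1) * h = t - h := by field_simp
        linarith
      simp only [hF]
      rw [Set.indicator_of_mem hmem]
  refine hDCT.congr' ?_
  filter_upwards [self_mem_nhdsWithin] with h hh
  rw [Set.mem_Ioi] at hh
  exact (hident h hh).symm

/-- hydrodynamic limit, integrated form. For every bounded continuous
`f : ℝ² → ℝ` and every `t ≥ 0`,
`lim_{h→0⁺} α h Σ_{m=1}^{⌊t/h⌋} E[f(e + h X_m)] = α ∫₀^t f(e + q s) ds`,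
where `X_n = ξ₁ + ⋯ + ξ_n` is the walk started at `0` and `q = (p₁−p₃, p₂−p₄)`. -/
theorem hydrodynamic_limit_integrated
    {Ω : Type*} [MeasurableSpace Ω] (P : Measure Ω) [IsProbabilityMeasure P]
    (p : Fin 4 → ℝ) (hp : ∀ l, 0 < p l) (hsum : ∑ l, p l = 1)
    (ξ : ℕ → Ω → ℤ × ℤ) (hmeas : ∀ k, Measurable (ξ k))
    (hindep : iIndepFun ξ P)
    (hlaw : ∀ k l, P {ω | ξ k ω = stepDir l} = ENNReal.ofReal (p l))
    (e : ℝ × ℝ) (α : ℝ) (hα : 0 < α)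
    (q : ℝ × ℝ) (hq : q = (p 0 - p 2, p 1 - p 3))
    (f : ℝ × ℝ → ℝ) (hf : Continuous f) (hfb : ∃ C : ℝ, ∀ x, |f x| ≤ C)
    (t : ℝ) (ht : 0 ≤ t) :
    Tendsto
      (fun h : ℝ => α * h *
        ∑ m ∈ Finset.Icc 1 (Nat.floor (t / h)),
          ∫ ω, f (e + h •
            ((((∑ k ∈ Finset.range m, ξ k ω).1 : ℝ),
              ((∑ k ∈ Finset.range m, ξ k ω).2 : ℝ)) : ℝ × ℝ)) ∂P)
      (nhdsWithin 0 (Set.Ioi 0))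
      (nhds (α * ∫ s in (0 : ℝ)..t, f (e + s • q))) := by
  obtain ⟨C, hC⟩ := hfb
  have hC0 : 0 ≤ C := (abs_nonneg _).trans (hC e)
  set Y : ℕ → Ω → ℝ × ℝ := fun k ω => castPair (ξ k ω) with hY
  have hYmeas : ∀ k, Measurable (Y k) := fun k => castPair_measurable.comp (hmeas k)
  have hmap : ∀ k, Measure.map (ξ k) P
      = ∑ l, ENNReal.ofReal (p l) • Measure.dirac (stepDir l) :=
    fun k => hydro_law P p (fun l => (hp l).le) hsum (ξ k) (hmeas k) (hlaw k)
  have hidd : ∀ i, IdentDistrib (Y i) (Y 0) P P := by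
    intro i
    refine ⟨(hYmeas i).aemeasurable, (hYmeas 0).aemeasurable, ?_⟩
    have h1 : ∀ k : ℕ, Measure.map (Y k) P = Measure.map castPair (Measure.map (ξ k) P) := by
      intro k
      rw [Measure.map_map castPair_measurable (hmeas k)]
      rfl
    rw [h1 i, h1 0, hmap i, hmap 0]
  have hint : Integrable (Y 0) P :=
    ⟨(hYmeas 0).aestronglyMeasurable,
      HasFiniteIntegral.of_bounded
        (hydro_bound P p (fun l => (hp l).le) hsum (ξ 0) (hmeas 0) (hlaw 0))⟩
  have hpair : Pairwise (Function.onFun (IndepFun · · P) Y) :=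
    fun i j hij => (hindep.indepFun hij).comp castPair_measurable castPair_measurable
  have hmean : ∫ ω, Y 0 ω ∂P = q := by
    rw [hq]
    exact hydro_mean P p (fun l => (hp l).le) (ξ 0) (hmeas 0) (hmap 0)
  have hslln : ∀ᵐ ω ∂P,
      Tendsto (fun n : ℕ => (n : ℝ)⁻¹ • ∑ k ∈ Finset.range n, Y k ω) atTop (nhds q) := by
    have := strong_law_ae Y hint hpair hidd
    rw [hmean] at this
    exact this
  have hrepr : ∀ (m : ℕ) (ω : Ω),
      ((((∑ k ∈ Finset.range m, ξ k ω).1 : ℤ) : ℝ),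
        (((∑ k ∈ Finset.range m, ξ k ω).2 : ℤ) : ℝ))
        = ∑ k ∈ Finset.range m, Y k ω := by
    intro m ω
    apply Prod.ext
    · simp [hY, castPair, Prod.fst_sum]
    · simp [hY, castPair, Prod.snd_sum]
  simp only [hrepr]
  -- measurability of the integrands
  have hSmeas : ∀ m : ℕ, Measurable (fun ω => ∑ k ∈ Finset.range m, Y k ω) :=
    fun m => Finset.measurable_sum (Finset.range m) fun k _ => hYmeas k
  have hfmeas : ∀ (h : ℝ) (m : ℕ),
      Measurable (fun ω => f (e + h • ∑ k ∈ Finset.range m, Y k ω)) :=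
    fun h m => hf.measurable.comp (measurable_const.add ((hSmeas m).const_smul h))
  have hfint : ∀ (h : ℝ) (m : ℕ),
      Integrable (fun ω => f (e + h • ∑ k ∈ Finset.range m, Y k ω)) P :=
    fun h m => ⟨(hfmeas h m).aestronglyMeasurable,
      HasFiniteIntegral.of_bounded (C := C)
        (Filter.Eventually.of_forall fun ω => (Real.norm_eq_abs _) ▸ hC _)⟩
  have key : Tendsto
      (fun h : ℝ => ∫ ω, (h * ∑ m ∈ Finset.Icc 1 (Nat.floor (t / h)),
        f (e + h • ∑ k ∈ Finset.range m, Y k ω)) ∂P)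
      (nhdsWithin 0 (Set.Ioi 0)) (nhds (∫ s in Set.Ioc (0:ℝ) t, f (e + s • q))) := by
    have hconst : (∫ (_ : Ω), (∫ s in Set.Ioc (0:ℝ) t, f (e + s • q)) ∂P)
        = ∫ s in Set.Ioc (0:ℝ) t, f (e + s • q) := by
      rw [integral_const]
      simp
    rw [← hconst]
    apply tendsto_integral_filter_of_dominated_convergence (bound := fun _ => C * t)
    · refine Filter.Eventually.of_forall fun h => ?_
      exact ((Finset.measurable_sum _ fun m _ => hfmeas h m).const_mul h).aestronglyMeasurable
    · filter_upwards [self_mem_nhdsWithin] with h hh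
      rw [Set.mem_Ioi] at hh
      refine Filter.Eventually.of_forall fun ω => ?_
      rw [Real.norm_eq_abs, abs_mul, abs_of_pos hh]
      have hbd : |∑ m ∈ Finset.Icc 1 (Nat.floor (t / h)),
          f (e + h • ∑ k ∈ Finset.range m, Y k ω)| ≤ (Nat.floor (t / h) : ℝ) * C := by
        calc |∑ m ∈ Finset.Icc 1 (Nat.floor (t / h)),
            f (e + h • ∑ k ∈ Finset.range m, Y k ω)|
            ≤ ∑ m ∈ Finset.Icc 1 (Nat.floor (t / h)),
              |f (e + h • ∑ k ∈ Finset.range m, Y k ω)| := Finset.abs_sum_le_sum_abs _ _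
          _ ≤ ∑ _m ∈ Finset.Icc 1 (Nat.floor (t / h)), C :=
              Finset.sum_le_sum fun m _ => hC _
          _ = (Nat.floor (t / h) : ℝ) * C := by
              rw [Finset.sum_const, Nat.card_Icc]
              simp [nsmul_eq_mul]
      have hNh : h * (Nat.floor (t / h) : ℝ) ≤ t := by
        rw [mul_comm, ← le_div_iff₀ hh]
        exact Nat.floor_le (div_nonneg ht hh.le)
      calc h * |∑ m ∈ Finset.Icc 1 (Nat.floor (t / h)),
          f (e + h • ∑ k ∈ Finset.range m, Y k ω)|
          ≤ h * ((Nat.floor (t / h) : ℝ) * C) := mul_le_mul_of_nonneg_left hbd hh.le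
        _ = (h * (Nat.floor (t / h) : ℝ)) * C := by ring
        _ ≤ t * C := mul_le_mul_of_nonneg_right hNh hC0
        _ = C * t := mul_comm _ _
    · exact integrable_const _
    · filter_upwards [hslln] with ω hω
      exact hydro_omega f hf C hC e q t ht (fun n => ∑ k ∈ Finset.range n, Y k ω) hω
  have hfinal := key.const_mul α
  rw [intervalIntegral.integral_of_le ht]
  refine hfinal.congr' ?_
  filter_upwards [self_mem_nhdsWithin] with h hh
  rw [Set.mem_Ioi] at hh
  rw [integral_const_mul, integral_finset_sum _ (fun m _ => hfint h m)]
  ring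
end
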